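/- arXiv:1910.12860 — 4 statements merged into one kernel-verified Lean document; each statement's English description precedes it below -/
import Mathlib

section
/- Let n ≥ 3 and m ≥ 2 be integers. Then the minimum cardinality of a doubly resolving set of the jellyfish graph JFG(n, m) equals nm; in particular, the set of all nm pendant vertices is a doubly resolving set of JFG(n, m). -/
open SimpleGraph

/-- Vertex type of the jellyfish graph `JFG(n, m)`: cycle vertices (left) and
pendant vertices (right, a cycle vertex together with a pendant index). -/
abbrev JVert (n m : ℕ) := (ZMod n) ⊕ ((ZMod n) × Fin m)

/-- The jellyfish graph `JFG(n, m)`: the cycle `C_n` together with `m` pendant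
vertices attached to each cycle vertex. -/
def jellyfish (n m : ℕ) : SimpleGraph (JVert n m) where
  Adj u v :=
    match u, v with
    | Sum.inl i, Sum.inl j => i ≠ j ∧ (i - j = 1 ∨ j - i = 1)
    | Sum.inl i, Sum.inr p => p.1 = i
    | Sum.inr p, Sum.inl i => p.1 = i
    | Sum.inr _, Sum.inr _ => False
  symm := by
    constructor
    rintro (i | p) (j | q) h
    · exact ⟨h.1.symm, h.2.symm⟩
    · exact h
    · exact h
    · exact h
  loopless := by
    constructor
    rintro (i | p) h
    · exact h.1 rfl
    · exact h


/-- Vertices `x, y` doubly resolve `u, v` if `d(u,x) - d(u,y) ≠ d(v,x) - d(v,y)`;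
`Z` is a doubly resolving set if every two distinct vertices are doubly resolved
by some two vertices of `Z`. -/
def IsDoublyResolving {V : Type*} (G : SimpleGraph V) (Z : Set V) : Prop :=
  ∀ u v : V, u ≠ v → ∃ x ∈ Z, ∃ y ∈ Z,
    (G.dist u x : ℤ) - (G.dist u y : ℤ) ≠ (G.dist v x : ℤ) - (G.dist v y : ℤ)

/-- `ψ(G)`: the minimum cardinality of a doubly resolving set of `G`. -/
noncomputable def doublyResolvingDim {V : Type*} (G : SimpleGraph V) : ℕ :=
  sInf {k | ∃ Z : Set V, IsDoublyResolving G Z ∧ Z.ncard = k}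

section Aux

variable {n m : ℕ}

lemma jelly_adj_inl_inr (i : ZMod n) (p : ZMod n × Fin m) :
    (jellyfish n m).Adj (Sum.inl i) (Sum.inr p) ↔ p.1 = i := Iff.rfl

lemma jelly_adj_inr_inl (i : ZMod n) (p : ZMod n × Fin m) :
    (jellyfish n m).Adj (Sum.inr p) (Sum.inl i) ↔ p.1 = i := Iff.rfl

lemma jelly_adj_inr_inr (p q : ZMod n × Fin m) :
    ¬ (jellyfish n m).Adj (Sum.inr p) (Sum.inr q) := fun h => h

lemma jelly_adj_inl_inl (i j : ZMod n) :
    (jellyfish n m).Adj (Sum.inl i) (Sum.inl j) ↔ i ≠ j ∧ (i - j = 1 ∨ j - i = 1) := Iff.rfl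

lemma one_ne_zero_zmod (hn : 3 ≤ n) : (1 : ZMod n) ≠ 0 := by
  haveI : Fact (1 < n) := ⟨by omega⟩
  exact one_ne_zero

lemma jelly_preconnected (hn : 3 ≤ n) : (jellyfish n m).Preconnected := by
  haveI : NeZero n := ⟨by omega⟩
  have hstep : ∀ k : ZMod n, (jellyfish n m).Adj (Sum.inl k) (Sum.inl (k + 1)) := by
    intro k
    rw [jelly_adj_inl_inl]
    constructor
    · intro h
      exact one_ne_zero_zmod hn (by linear_combination -h)
    · right; ring
  have hcast : ∀ t : ℕ, (jellyfish n m).Reachable (Sum.inl 0) (Sum.inl (t : ZMod n)) := by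
    intro t
    induction t with
    | zero =>
      simp only [Nat.cast_zero]
      exact Reachable.refl _
    | succ s ih =>
      refine ih.trans ?_
      push_cast
      exact (hstep (s : ZMod n)).reachable
  have hinl : ∀ i : ZMod n, (jellyfish n m).Reachable (Sum.inl 0) (Sum.inl i) := by
    intro i
    have := hcast i.val
    rwa [ZMod.natCast_val, ZMod.cast_id] at this
  have hall : ∀ u : JVert n m, (jellyfish n m).Reachable (Sum.inl 0) u := by
    rintro (i | ⟨i, a⟩)
    · exact hinl i
    · exact (hinl i).trans (Adj.reachable (by rw [jelly_adj_inl_inr]))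
  intro u v
  exact (hall u).symm.trans (hall v)

/-- distance is preserved by a graph automorphism -/
lemma iso_dist_le {V : Type*} {G : SimpleGraph V} (f : G ≃g G) (u v : V) :
    G.dist (f u) (f v) ≤ G.dist u v := by
  by_cases h : G.Reachable u v
  · obtain ⟨p, hp⟩ := h.exists_walk_length_eq_dist
    calc G.dist (f u) (f v) ≤ (p.map f.toHom).length := SimpleGraph.dist_le _
      _ = p.length := Walk.length_map _ _
      _ = G.dist u v := hp
  · have h2 : ¬ G.Reachable (f u) (f v) := by
      intro hr
      exact h (by simpa using hr.map f.symm.toHom)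
    simp [SimpleGraph.dist_eq_zero_of_not_reachable h, SimpleGraph.dist_eq_zero_of_not_reachable h2]

lemma iso_dist_eq {V : Type*} {G : SimpleGraph V} (f : G ≃g G) (u v : V) :
    G.dist (f u) (f v) = G.dist u v := by
  refine le_antisymm (iso_dist_le f u v) ?_
  have := iso_dist_le f.symm (f u) (f v)
  simpa using this

/-- the function swapping pendants `b`, `b'` at cycle vertex `j` -/
def pswapFun (j : ZMod n) (b b' : Fin m) : JVert n m → JVert n m
  | Sum.inl i => Sum.inl i
  | Sum.inr p => Sum.inr (p.1, if p.1 = j then Equiv.swap b b' p.2 else p.2)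

lemma pswapFun_invol (j : ZMod n) (b b' : Fin m) (u : JVert n m) :
    pswapFun j b b' (pswapFun j b b' u) = u := by
  rcases u with i | ⟨i, a⟩
  · rfl
  · simp only [pswapFun]
    by_cases h : i = j <;> simp [h]

/-- the pendant swap as a graph automorphism -/
def pswap (j : ZMod n) (b b' : Fin m) : jellyfish n m ≃g jellyfish n m where
  toFun := pswapFun j b b'
  invFun := pswapFun j b b'
  left_inv := pswapFun_invol j b b'
  right_inv := pswapFun_invol j b b'
  map_rel_iff' := by
    rintro (i | ⟨i, a⟩) (i' | ⟨i', a'⟩) <;>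
      simp [pswapFun, jelly_adj_inl_inl, jelly_adj_inl_inr, jelly_adj_inr_inl,
        jelly_adj_inr_inr]

lemma pswap_apply_left (j : ZMod n) (b b' : Fin m) :
    pswap j b b' (Sum.inr (j, b)) = Sum.inr (j, b') := by
  simp [pswap, pswapFun]

lemma pswap_apply_fixed (j : ZMod n) (b b' : Fin m) (x : JVert n m)
    (hx1 : x ≠ Sum.inr (j, b)) (hx2 : x ≠ Sum.inr (j, b')) :
    pswap j b b' x = x := by
  rcases x with i | ⟨i, a⟩
  · rfl
  · show Sum.inr (i, if i = j then Equiv.swap b b' a else a) = Sum.inr (i, a)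
    by_cases h : i = j
    · subst h
      have hab : a ≠ b := by intro h; exact hx1 (by rw [h])
      have hab' : a ≠ b' := by intro h; exact hx2 (by rw [h])
      simp [Equiv.swap_apply_of_ne_of_ne hab hab']
    · simp [h]

/-- distances to twin pendants agree -/
lemma dist_twin (j : ZMod n) (b b' : Fin m) (x : JVert n m)
    (hx1 : x ≠ Sum.inr (j, b)) (hx2 : x ≠ Sum.inr (j, b')) :
    (jellyfish n m).dist x (Sum.inr (j, b)) = (jellyfish n m).dist x (Sum.inr (j, b')) := by
  have := iso_dist_eq (pswap j b b') x (Sum.inr (j, b))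
  rw [pswap_apply_fixed j b b' x hx1 hx2, pswap_apply_left] at this
  exact this.symm

/-- distance from a pendant goes through its support vertex -/
lemma dist_pendant (hn : 3 ≤ n) (i : ZMod n) (a : Fin m) (x : JVert n m)
    (hx1 : x ≠ Sum.inr (i, a)) (hx2 : x ≠ Sum.inl i) :
    (jellyfish n m).dist (Sum.inr (i, a)) x = (jellyfish n m).dist (Sum.inl i) x + 1 := by
  have hpre := jelly_preconnected (m := m) hn
  have hadj : (jellyfish n m).Adj (Sum.inr (i, a)) (Sum.inl i) := by rw [jelly_adj_inr_inl]
  refine le_antisymm ?_ ?_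
  · obtain ⟨p, hp⟩ := (hpre (Sum.inl i) x).exists_walk_length_eq_dist
    calc (jellyfish n m).dist (Sum.inr (i, a)) x ≤ (Walk.cons hadj p).length :=
          SimpleGraph.dist_le _
      _ = (jellyfish n m).dist (Sum.inl i) x + 1 := by
          rw [Walk.length_cons, hp]
  · obtain ⟨p, hp⟩ := (hpre (Sum.inr (i, a)) x).exists_walk_length_eq_dist
    cases p with
    | nil => exact absurd rfl (Ne.symm hx1)
    | @cons _ c _ h q =>
      rcases c with i' | p'
      · have : i = i' := h
        subst this
        have h3 : (jellyfish n m).dist (Sum.inl i) x ≤ q.length := SimpleGraph.dist_le _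
        rw [Walk.length_cons] at hp
        omega
      · exact absurd h (jelly_adj_inr_inr _ _)

end Aux

lemma jelly_drs (n m : ℕ) (hn : 3 ≤ n) (hm : 2 ≤ m) :
    IsDoublyResolving (jellyfish n m) (Set.range (Sum.inr : ZMod n × Fin m → JVert n m)) := by
  haveI : NeZero n := ⟨by omega⟩
  have hpre := jelly_preconnected (m := m) (n := n) hn
  have hdistpos : ∀ u v : JVert n m, u ≠ v → (jellyfish n m).dist u v ≠ 0 := by
    intro u v huv
    rw [SimpleGraph.dist_ne_zero_iff_ne_and_reachable]
    exact ⟨huv, hpre u v⟩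
  set G := jellyfish n m with hG
  set Z := Set.range (Sum.inr : ZMod n × Fin m → JVert n m) with hZ
  have hmem : ∀ p : ZMod n × Fin m, Sum.inr p ∈ Z := fun p => ⟨p, rfl⟩
  -- the mixed case, as a helper
  have mixed : ∀ (i : ZMod n) (q : ZMod n × Fin m),
      ∃ x ∈ Z, ∃ y ∈ Z, (G.dist (Sum.inl i) x : ℤ) - (G.dist (Sum.inl i) y : ℤ) ≠
        (G.dist (Sum.inr q) x : ℤ) - (G.dist (Sum.inr q) y : ℤ) := by
    rintro i ⟨j, b⟩
    set b' : Fin m := if b.val = 0 then ⟨1, by omega⟩ else ⟨0, by omega⟩ with hb'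
    have hbb' : b ≠ b' := by
      by_cases h : b.val = 0 <;>
        · refine Fin.ne_of_val_ne ?_
          simp [hb', h]
    refine ⟨Sum.inr (j, b), hmem _, Sum.inr (j, b'), hmem _, ?_⟩
    have h1 : G.dist (Sum.inl i) (Sum.inr (j, b)) = G.dist (Sum.inl i) (Sum.inr (j, b')) :=
      dist_twin j b b' _ (by simp) (by simp)
    have h2 : G.dist (Sum.inr (j, b)) (Sum.inr (j, b)) = 0 := SimpleGraph.dist_self
    have h3 : G.dist (Sum.inr (j, b)) (Sum.inr (j, b')) ≠ 0 := by
      refine hdistpos _ _ ?_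
      simp [hbb']
    rw [h1, h2]
    intro hcon
    omega
  rintro (i | p) (i' | q) huv
  · -- both cycle vertices
    have hii' : i ≠ i' := by simpa using huv
    set z : Fin m := ⟨0, by omega⟩ with hz
    refine ⟨Sum.inr (i, z), hmem _, Sum.inr (i', z), hmem _, ?_⟩
    have h1 : G.dist (Sum.inl i) (Sum.inr (i, z)) = 1 :=
      SimpleGraph.dist_eq_one_iff_adj.mpr (by rw [hG, jelly_adj_inl_inr])
    have h2 : G.dist (Sum.inl i') (Sum.inr (i', z)) = 1 :=
      SimpleGraph.dist_eq_one_iff_adj.mpr (by rw [hG, jelly_adj_inl_inr])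
    have h3 : G.dist (Sum.inl i) (Sum.inr (i', z)) ≠ 0 := hdistpos _ _ (by simp)
    have h4 : G.dist (Sum.inl i) (Sum.inr (i', z)) ≠ 1 := by
      intro h
      have := SimpleGraph.dist_eq_one_iff_adj.mp h
      rw [hG, jelly_adj_inl_inr] at this
      exact hii' this.symm
    have h5 : G.dist (Sum.inl i') (Sum.inr (i, z)) ≠ 0 := hdistpos _ _ (by simp)
    have h6 : G.dist (Sum.inl i') (Sum.inr (i, z)) ≠ 1 := by
      intro h
      have := SimpleGraph.dist_eq_one_iff_adj.mp h
      rw [hG, jelly_adj_inl_inr] at this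
      exact hii' this
    rw [h1, h2]
    intro hcon
    omega
  · exact mixed i q
  · obtain ⟨x, hx, y, hy, h⟩ := mixed i' p
    exact ⟨x, hx, y, hy, h.symm⟩
  · -- both pendants
    refine ⟨Sum.inr p, hmem _, Sum.inr q, hmem _, ?_⟩
    have h1 : G.dist (Sum.inr p) (Sum.inr p) = 0 := SimpleGraph.dist_self
    have h2 : G.dist (Sum.inr q) (Sum.inr q) = 0 := SimpleGraph.dist_self
    have h3 : G.dist (Sum.inr p) (Sum.inr q) ≠ 0 := hdistpos _ _ huv
    have h4 : G.dist (Sum.inr q) (Sum.inr p) = G.dist (Sum.inr p) (Sum.inr q) :=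
      SimpleGraph.dist_comm
    rw [h1, h2, h4]
    intro hcon
    omega

lemma jelly_dim (n m : ℕ) (hn : 3 ≤ n) (hm : 2 ≤ m) :
    doublyResolvingDim (jellyfish n m) = n * m := by
  classical
  haveI : NeZero n := ⟨by omega⟩
  have hcard : (Set.range (Sum.inr : ZMod n × Fin m → JVert n m)).ncard = n * m := by
    rw [← Nat.card_coe_set_eq, Nat.card_range_of_injective Sum.inr_injective]
    simp [Nat.card_eq_fintype_card, ZMod.card]
  have hmemS : n * m ∈
      {k | ∃ Z : Set (JVert n m), IsDoublyResolving (jellyfish n m) Z ∧ Z.ncard = k} :=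
    ⟨_, jelly_drs n m hn hm, hcard⟩
  have hlb : ∀ k ∈
      {k | ∃ Z : Set (JVert n m), IsDoublyResolving (jellyfish n m) Z ∧ Z.ncard = k},
      n * m ≤ k := by
    rintro k ⟨Z, hZ, rfl⟩
    set g : ZMod n × Fin m → JVert n m :=
      fun p => if Sum.inr p ∈ Z then Sum.inr p else Sum.inl p.1 with hg
    have hsupport : ∀ p : ZMod n × Fin m, Sum.inr p ∉ Z → Sum.inl p.1 ∈ Z := by
      rintro ⟨i, a⟩ hp
      by_contra hi
      obtain ⟨x, hx, y, hy, hne⟩ := hZ (Sum.inl i) (Sum.inr (i, a)) (by simp)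
      have e1 : (jellyfish n m).dist (Sum.inr (i, a)) x = (jellyfish n m).dist (Sum.inl i) x + 1 :=
        dist_pendant hn i a x (fun h => hp (h ▸ hx)) (fun h => hi (h ▸ hx))
      have e2 : (jellyfish n m).dist (Sum.inr (i, a)) y = (jellyfish n m).dist (Sum.inl i) y + 1 :=
        dist_pendant hn i a y (fun h => hp (h ▸ hy)) (fun h => hi (h ▸ hy))
      apply hne
      rw [e1, e2]
      push_cast
      ring
    have htwin : ∀ (i : ZMod n) (a a' : Fin m), a ≠ a' →
        Sum.inr (i, a) ∉ Z → Sum.inr (i, a') ∉ Z → False := by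
      intro i a a' haa' h1 h2
      obtain ⟨x, hx, y, hy, hne⟩ := hZ (Sum.inr (i, a)) (Sum.inr (i, a')) (by simp [haa'])
      have e1 : (jellyfish n m).dist x (Sum.inr (i, a)) = (jellyfish n m).dist x (Sum.inr (i, a')) :=
        dist_twin i a a' x (fun h => h1 (h ▸ hx)) (fun h => h2 (h ▸ hx))
      have e2 : (jellyfish n m).dist y (Sum.inr (i, a)) = (jellyfish n m).dist y (Sum.inr (i, a')) :=
        dist_twin i a a' y (fun h => h1 (h ▸ hy)) (fun h => h2 (h ▸ hy))
      apply hne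
      rw [SimpleGraph.dist_comm (u := Sum.inr (i, a)) (v := x),
        SimpleGraph.dist_comm (u := Sum.inr (i, a)) (v := y),
        SimpleGraph.dist_comm (u := Sum.inr (i, a')) (v := x),
        SimpleGraph.dist_comm (u := Sum.inr (i, a')) (v := y), e1, e2]
    have hgZ : ∀ p, g p ∈ Z := by
      intro p
      rw [hg]
      dsimp only
      split_ifs with h
      · exact h
      · exact hsupport p h
    have hginj : Function.Injective g := by
      rintro ⟨i, a⟩ ⟨i', a'⟩ h
      rw [hg] at h
      dsimp only at h
      by_cases h1 : Sum.inr (i, a) ∈ Z <;> by_cases h2 : Sum.inr (i', a') ∈ Z <;>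
        simp only [h1, h2, if_true, if_false] at h
      · exact Sum.inr_injective h
      · exact absurd h (by simp)
      · exact absurd h (by simp)
      · have hii' : i = i' := by simpa using h
        subst hii'
        by_cases haa' : a = a'
        · rw [haa']
        · exact absurd (htwin i a a' haa' h1 h2) not_false
    have hle : Nat.card (ZMod n × Fin m) ≤ Nat.card Z :=
      Nat.card_le_card_of_injective (fun p => (⟨g p, hgZ p⟩ : Z))
        (fun p q h => hginj (congrArg Subtype.val h))
    rw [Nat.card_coe_set_eq] at hle
    calc n * m = Nat.card (ZMod n × Fin m) := by
          simp [Nat.card_eq_fintype_card, ZMod.card]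
      _ ≤ Z.ncard := hle
  exact le_antisymm (Nat.sInf_le hmemS) (le_csInf ⟨_, hmemS⟩ hlb)


theorem jellyfish_doublyResolvingDim (n m : ℕ) (hn : 3 ≤ n) (hm : 2 ≤ m) :
    doublyResolvingDim (jellyfish n m) = n * m ∧
    IsDoublyResolving (jellyfish n m) (Set.range (Sum.inr : ZMod n × Fin m → JVert n m)) := by
  exact ⟨jelly_dim n m hn hm, jelly_drs n m hn hm⟩
end

section
/- Let n ≥ 3 and m ≥ 2 be integers. Then every strong resolving set of the jellyfish graph JFG(n, m) has cardinality at least nm − 1; in particular, the set N of all pendant vertices except one pendant vertex v_{im} at each cycle vertex i, for 1 ≤ i ≤ n, is not a strong resolving set of JFG(n, m). -/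
open SimpleGraph

/-- `w` strongly resolves `u` and `v`: `u` lies on a shortest `v`–`w` path or
`v` lies on a shortest `u`–`w` path. -/
def StronglyResolves {V : Type*} (G : SimpleGraph V) (w u v : V) : Prop :=
  G.dist v w = G.dist v u + G.dist u w ∨ G.dist u w = G.dist u v + G.dist v w

/-- `N` is a strong resolving set of `G`. -/
def IsStrongResolving {V : Type*} (G : SimpleGraph V) (N : Set V) : Prop :=
  ∀ u v : V, u ≠ v → ∃ w ∈ N, StronglyResolves G w u v

lemma jellyfish_connected (n m : ℕ) (hn : 3 ≤ n) : (jellyfish n m).Connected := by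
  haveI : NeZero n := ⟨by omega⟩
  haveI : Fact (1 < n) := ⟨by omega⟩
  have hstep : ∀ i : ZMod n, (jellyfish n m).Adj (Sum.inl i) (Sum.inl (i + 1)) := by
    intro i
    refine ⟨fun h => one_ne_zero (left_eq_add.mp h), Or.inr (by ring)⟩
  have hcyc : ∀ (i : ZMod n) (k : ℕ),
      (jellyfish n m).Reachable (Sum.inl i) (Sum.inl (i + (k : ZMod n))) := by
    intro i k
    induction k with
    | zero => simpa using Reachable.refl (Sum.inl i : JVert n m)
    | succ k ih =>
      have hc : ((k + 1 : ℕ) : ZMod n) = (k : ZMod n) + 1 := by push_cast; ring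
      rw [hc, ← add_assoc]
      exact ih.trans (hstep (i + k)).reachable
  have hbase : ∀ (i j : ZMod n), (jellyfish n m).Reachable (Sum.inl i) (Sum.inl j) := by
    intro i j
    have h := hcyc i (j - i).val
    rwa [ZMod.natCast_val, ZMod.cast_id, add_sub_cancel] at h
  have hpend : ∀ p : ZMod n × Fin m, (jellyfish n m).Adj (Sum.inl p.1) (Sum.inr p) := by
    intro p; exact rfl
  constructor
  · rintro (i | p) (j | q)
    · exact hbase i j
    · exact (hbase i q.1).trans (hpend q).reachable
    · exact ((hbase p.1 j).symm.trans (hpend p).reachable).symm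
    · exact (hpend p).symm.reachable.trans ((hbase p.1 q.1).trans (hpend q).reachable)

lemma pendant_dist (n m : ℕ) (hn : 3 ≤ n) (p : ZMod n × Fin m) (w : JVert n m)
    (hw : w ≠ Sum.inr p) :
    (jellyfish n m).dist (Sum.inr p) w = 1 + (jellyfish n m).dist (Sum.inl p.1) w := by
  have hc := jellyfish_connected n m hn
  have hadj : (jellyfish n m).Adj (Sum.inr p) (Sum.inl p.1) := rfl
  apply le_antisymm
  · calc (jellyfish n m).dist (Sum.inr p) w
        ≤ (jellyfish n m).dist (Sum.inr p) (Sum.inl p.1)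
          + (jellyfish n m).dist (Sum.inl p.1) w := hc.dist_triangle
      _ = 1 + (jellyfish n m).dist (Sum.inl p.1) w := by
          rw [SimpleGraph.dist_eq_one_iff_adj.mpr hadj]
  · obtain ⟨W, hW⟩ := hc.exists_walk_length_eq_dist (Sum.inr p) w
    cases W with
    | nil => exact absurd rfl hw.symm
    | @cons _ x _ h W' =>
      obtain (i | q) := x
      · have hx : p.1 = i := h
        subst hx
        have h1 : (jellyfish n m).dist (Sum.inl p.1) w ≤ W'.length := dist_le W'
        rw [SimpleGraph.Walk.length_cons] at hW
        omega
      · exact absurd h (by simp [jellyfish])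

lemma resolve_pendants (n m : ℕ) (hn : 3 ≤ n) (p q : ZMod n × Fin m) (hpq : p ≠ q)
    (w : JVert n m) (hres : StronglyResolves (jellyfish n m) w (Sum.inr p) (Sum.inr q)) :
    w = Sum.inr p ∨ w = Sum.inr q := by
  by_contra hcon
  push_neg at hcon
  obtain ⟨hwp, hwq⟩ := hcon
  have hc := jellyfish_connected n m hn
  have h1 := pendant_dist n m hn p w hwp
  have h2 := pendant_dist n m hn q w hwq
  have hqp : (Sum.inr q : JVert n m) ≠ Sum.inr p := fun h => hpq (Sum.inr_injective h).symm
  have h3 := pendant_dist n m hn p (Sum.inr q) hqp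
  have h4 := pendant_dist n m hn q (Sum.inl p.1) (by simp)
  rw [SimpleGraph.dist_comm (u := (Sum.inl p.1 : JVert n m)) (v := Sum.inr q),
    h4, SimpleGraph.dist_comm (u := (Sum.inl q.1 : JVert n m)) (v := Sum.inl p.1)] at h3
  have ht1 : (jellyfish n m).dist (Sum.inl p.1) w ≤
      (jellyfish n m).dist (Sum.inl p.1) (Sum.inl q.1)
      + (jellyfish n m).dist (Sum.inl q.1) w := hc.dist_triangle
  have ht2 : (jellyfish n m).dist (Sum.inl q.1) w ≤
      (jellyfish n m).dist (Sum.inl q.1) (Sum.inl p.1)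
      + (jellyfish n m).dist (Sum.inl p.1) w := hc.dist_triangle
  rw [SimpleGraph.dist_comm (u := (Sum.inl q.1 : JVert n m)) (v := Sum.inl p.1)] at ht2
  have hcomm : (jellyfish n m).dist (Sum.inr q) (Sum.inr p)
      = (jellyfish n m).dist (Sum.inr p) (Sum.inr q) := SimpleGraph.dist_comm
  rcases hres with h | h <;> rw [hcomm] at * <;> omega

theorem jellyfish_strong_lower_bound (n m : ℕ) (hn : 3 ≤ n) (hm : 2 ≤ m) :
    (∀ N : Set (JVert n m), IsStrongResolving (jellyfish n m) N → n * m - 1 ≤ N.ncard) ∧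
    ¬ IsStrongResolving (jellyfish n m)
      {w : JVert n m | ∃ (i : ZMod n) (j : Fin m), (j : ℕ) ≠ m - 1 ∧ w = Sum.inr (i, j)} := by
  haveI : NeZero n := ⟨by omega⟩
  haveI : Fact (1 < n) := ⟨by omega⟩
  constructor
  · intro N hN
    set S : Set (ZMod n × Fin m) := {p | Sum.inr p ∈ N} with hSdef
    have hS : Sᶜ.Subsingleton := by
      intro p hp q hq
      by_contra hne
      obtain ⟨w, hwN, hres⟩ := hN (Sum.inr p) (Sum.inr q) (by simpa using hne)
      rcases resolve_pendants n m hn p q hne w hres with h | h <;> subst h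
      · exact hp hwN
      · exact hq hwN
    have hcard : S.ncard + Sᶜ.ncard = n * m := by
      rw [Set.ncard_add_ncard_compl, Nat.card_eq_fintype_card, Fintype.card_prod,
        ZMod.card, Fintype.card_fin]
    have hle : Sᶜ.ncard ≤ 1 := (Set.ncard_le_one_iff (Set.toFinite _)).mpr fun ha hb => hS ha hb
    have hsub : Sum.inr '' S ⊆ N := by rintro _ ⟨p, hp, rfl⟩; exact hp
    have himg : ((Sum.inr : ZMod n × Fin m → JVert n m) '' S).ncard = S.ncard :=
      Set.ncard_image_of_injective S Sum.inr_injective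
    have := Set.ncard_le_ncard hsub N.toFinite
    omega
  · intro hN
    have hm1 : m - 1 < m := by omega
    set u : JVert n m := Sum.inr (0, ⟨m - 1, hm1⟩) with hu
    set v : JVert n m := Sum.inr (1, ⟨m - 1, hm1⟩) with hv
    have huv : u ≠ v := by
      simp only [hu, hv, ne_eq, Sum.inr.injEq, Prod.mk.injEq]
      intro h
      exact zero_ne_one h.1
    obtain ⟨w, hwN, hres⟩ := hN u v huv
    obtain ⟨i, j, hj, hw⟩ := hwN
    have hne : ((0 : ZMod n), (⟨m - 1, hm1⟩ : Fin m)) ≠ ((1 : ZMod n), ⟨m - 1, hm1⟩) := by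
      intro h
      exact zero_ne_one (Prod.mk.injEq .. ▸ h : _ ∧ _).1
    rcases resolve_pendants n m hn _ _ hne w hres with h | h <;>
      · rw [hw] at h
        have := (Sum.inr_injective h)
        exact hj (congrArg (fun p => (p.2 : ℕ)) this)
end

section
/- Let n ≥ 3 and m ≥ 2 be integers. Then the strong metric dimension of the jellyfish graph JFG(n, m) equals nm − 1; in particular, the set of all pendant vertices except the single pendant vertex v_{nm} is a strong resolving set of JFG(n, m). -/
open SimpleGraph

/-- The strong metric dimension of `G`: the minimum cardinality of a strong
resolving set. -/
noncomputable def strongMetricDim {V : Type*} (G : SimpleGraph V) : ℕ :=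
  sInf {k | ∃ N : Set V, IsStrongResolving G N ∧ N.ncard = k}

lemma jellyfish_adj_pendant {n m : ℕ} (i : ZMod n) (s : Fin m) :
    (jellyfish n m).Adj (Sum.inl i) (Sum.inr (i, s)) := rfl

/-- key distance fact -/
lemma jellyfish_dist_pendant {n m : ℕ} (hn : 3 ≤ n) (x : JVert n m) (i : ZMod n) (s : Fin m)
    (hx : x ≠ Sum.inr (i, s)) :
    (jellyfish n m).dist x (Sum.inr (i, s)) = (jellyfish n m).dist x (Sum.inl i) + 1 := by
  have hc := jellyfish_connected n m hn
  apply le_antisymm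
  · calc (jellyfish n m).dist x (Sum.inr (i, s))
        ≤ (jellyfish n m).dist x (Sum.inl i)
          + (jellyfish n m).dist (Sum.inl i) (Sum.inr (i, s)) := hc.dist_triangle
      _ ≤ (jellyfish n m).dist x (Sum.inl i) + 1 := by
          gcongr
          exact SimpleGraph.dist_le ((jellyfish_adj_pendant i s).toWalk)
  · obtain ⟨p, hp⟩ := hc.exists_walk_length_eq_dist (Sum.inr (i, s)) x
    rw [SimpleGraph.dist_comm] at hp ⊢
    cases p with
    | nil => exact absurd rfl hx.symm
    | @cons _ b _ h q =>
      have hb : b = Sum.inl i := by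
        cases b with
        | inl j =>
          have : i = j := h
          rw [← this]
        | inr q => exact (h : False).elim
      subst hb
      have := SimpleGraph.dist_le q
      simp [SimpleGraph.Walk.length_cons] at hp
      omega

lemma pendant_resolve_only {n m : ℕ} (hn : 3 ≤ n) (a b : ZMod n × Fin m) (hab : a ≠ b)
    (w : JVert n m) (hw : StronglyResolves (jellyfish n m) w (Sum.inr a) (Sum.inr b)) :
    w = Sum.inr a ∨ w = Sum.inr b := by
  by_contra hc
  push_neg at hc
  obtain ⟨hwa, hwb⟩ := hc
  have hconn := jellyfish_connected n m hn
  cases hw with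
  | inl h =>
    have h1 : (jellyfish n m).dist (Sum.inr b) (Sum.inr a)
        = (jellyfish n m).dist (Sum.inr b) (Sum.inl a.1) + 1 :=
      jellyfish_dist_pendant hn _ a.1 a.2 (fun hh => hab (Sum.inr.inj hh).symm)
    have h2 : (jellyfish n m).dist (Sum.inr a) w
        = (jellyfish n m).dist w (Sum.inl a.1) + 1 := by
      rw [SimpleGraph.dist_comm]
      exact jellyfish_dist_pendant hn w a.1 a.2 hwa
    have h3 : (jellyfish n m).dist (Sum.inr b) w
        ≤ (jellyfish n m).dist (Sum.inr b) (Sum.inl a.1)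
          + (jellyfish n m).dist (Sum.inl a.1) w := hconn.dist_triangle
    rw [SimpleGraph.dist_comm (u := Sum.inl a.1) (v := w)] at h3
    omega
  | inr h =>
    have h1 : (jellyfish n m).dist (Sum.inr a) (Sum.inr b)
        = (jellyfish n m).dist (Sum.inr a) (Sum.inl b.1) + 1 :=
      jellyfish_dist_pendant hn _ b.1 b.2 (fun hh => hab (Sum.inr.inj hh))
    have h2 : (jellyfish n m).dist (Sum.inr b) w
        = (jellyfish n m).dist w (Sum.inl b.1) + 1 := by
      rw [SimpleGraph.dist_comm]
      exact jellyfish_dist_pendant hn w b.1 b.2 hwb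
    have h3 : (jellyfish n m).dist (Sum.inr a) w
        ≤ (jellyfish n m).dist (Sum.inr a) (Sum.inl b.1)
          + (jellyfish n m).dist (Sum.inl b.1) w := hconn.dist_triangle
    rw [SimpleGraph.dist_comm (u := Sum.inl b.1) (v := w)] at h3
    omega

theorem jellyfish_strongMetricDim (n m : ℕ) (hn : 3 ≤ n) (hm : 2 ≤ m) :
    strongMetricDim (jellyfish n m) = n * m - 1 ∧
    IsStrongResolving (jellyfish n m)
      (Set.range (Sum.inr : ZMod n × Fin m → JVert n m) \
        {Sum.inr ((n : ZMod n), (⟨m - 1, by omega⟩ : Fin m))}) := by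
  haveI : NeZero n := ⟨by omega⟩
  set G := jellyfish n m with hG
  set z : JVert n m := Sum.inr ((n : ZMod n), (⟨m - 1, by omega⟩ : Fin m)) with hz
  set P : Set (JVert n m) := Set.range (Sum.inr : ZMod n × Fin m → JVert n m) with hP
  set N₀ : Set (JVert n m) := P \ {z} with hN₀
  -- membership of pendant (j, 0) in N₀
  have hmem : ∀ j : ZMod n, Sum.inr (j, (⟨0, by omega⟩ : Fin m)) ∈ N₀ := by
    intro j
    refine ⟨Set.mem_range_self _, ?_⟩
    simp only [Set.mem_singleton_iff, hz, Sum.inr.injEq, Prod.mk.injEq, not_and]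
    intro _
    intro hfin
    have := Fin.mk.injEq (n := m) 0 (by omega) (m-1) (by omega) ▸ hfin
    omega
  have hznei : ∀ (x : ZMod n × Fin m) (j : ZMod n), Sum.inr x = z →
      (Sum.inr x : JVert n m) ≠ Sum.inr (j, (⟨0, by omega⟩ : Fin m)) := by
    intro x j hx h
    rw [hx] at h
    simp only [hz, Sum.inr.injEq, Prod.mk.injEq] at h
    have : m - 1 = 0 := Fin.mk.inj_iff.mp h.2
    omega
  have hres : IsStrongResolving G N₀ := by
    intro u v huv
    rcases u with i | a
    · rcases v with j | b
      · -- both cycle vertices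
        refine ⟨Sum.inr (i, ⟨0, by omega⟩), hmem i, Or.inl ?_⟩
        rw [jellyfish_dist_pendant hn (Sum.inl j) i _ (by simp),
            jellyfish_dist_pendant hn (Sum.inl i) i _ (by simp),
            SimpleGraph.dist_self]
      · by_cases hb : (Sum.inr b : JVert n m) = z
        · refine ⟨Sum.inr (i, ⟨0, by omega⟩), hmem i, Or.inl ?_⟩
          rw [jellyfish_dist_pendant hn (Sum.inr b) i _ (hznei b i hb),
              jellyfish_dist_pendant hn (Sum.inl i) i _ (by simp),
              SimpleGraph.dist_self]
        · refine ⟨Sum.inr b, ⟨Set.mem_range_self _, hb⟩, Or.inr ?_⟩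
          simp [SimpleGraph.dist_self]
    · by_cases ha : (Sum.inr a : JVert n m) = z
      · rcases v with j | b
        · refine ⟨Sum.inr (j, ⟨0, by omega⟩), hmem j, Or.inr ?_⟩
          rw [jellyfish_dist_pendant hn (Sum.inr a) j _ (hznei a j ha),
              jellyfish_dist_pendant hn (Sum.inl j) j _ (by simp),
              SimpleGraph.dist_self]
        · have hb : (Sum.inr b : JVert n m) ≠ z := fun h => huv (ha.trans h.symm)
          refine ⟨Sum.inr b, ⟨Set.mem_range_self _, hb⟩, Or.inr ?_⟩
          simp [SimpleGraph.dist_self]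
      · refine ⟨Sum.inr a, ⟨Set.mem_range_self _, ha⟩, Or.inl ?_⟩
        simp [SimpleGraph.dist_self]
  -- cardinalities
  have hPcard : P.ncard = n * m := by
    rw [hP, ← Set.image_univ, Set.ncard_image_of_injective _ Sum.inr_injective,
        Set.ncard_univ]
    simp [Nat.card_eq_fintype_card, ZMod.card]
  have hN₀card : N₀.ncard = n * m - 1 := by
    rw [hN₀, Set.ncard_diff_singleton_of_mem (Set.mem_range_self _), hPcard]
  have hnm : 6 ≤ n * m := Nat.mul_le_mul hn hm
  -- lower bound
  have hlow : ∀ N : Set (JVert n m), IsStrongResolving G N → n * m - 1 ≤ N.ncard := by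
    intro N hN
    by_contra hlt
    push_neg at hlt
    have hsub : P ⊆ (P \ N) ∪ N := by
      intro x hx
      by_cases h : x ∈ N
      · exact Or.inr h
      · exact Or.inl ⟨hx, h⟩
    have hu : P.ncard ≤ (P \ N).ncard + N.ncard :=
      le_trans (Set.ncard_le_ncard hsub (Set.toFinite _)) (Set.ncard_union_le _ _)
    rw [hPcard] at hu
    have h2 : 1 < (P \ N).ncard := by omega
    obtain ⟨x, y, hx, hy, hxy⟩ := (Set.one_lt_ncard_iff).1 h2
    obtain ⟨a, rfl⟩ := hx.1
    obtain ⟨b, rfl⟩ := hy.1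
    obtain ⟨w, hwN, hw⟩ := hN _ _ hxy
    rcases pendant_resolve_only hn a b (fun h => hxy (congrArg _ h)) w hw with rfl | rfl
    · exact hx.2 hwN
    · exact hy.2 hwN
  refine ⟨?_, hres⟩
  have hmemS : n * m - 1 ∈ {k | ∃ N : Set (JVert n m), IsStrongResolving G N ∧ N.ncard = k} :=
    ⟨N₀, hres, hN₀card⟩
  refine le_antisymm (Nat.sInf_le hmemS) (le_csInf ⟨_, hmemS⟩ ?_)
  rintro k ⟨N, hN, rfl⟩
  exact hlow N hN
end

section
/- Let n ≥ 8 be an even integer and let k = n/2 − 1. Let Γ = Cay(ℤ_n, S_k) be the Cayley graph on ℤ_n with connection set S_k = ℤ_n \ {0, n/2}. Then every clique W of Γ of cardinality k + 1 is a resolving set of Γ; moreover, for any such clique W and any vertex x ∉ W, the set W ∪ {x} is also a resolving set of Γ. -/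
open SimpleGraph

/-- The Cayley graph `Cay(ℤ_n, S)` with connection set `S = ℤ_n \ {0, n/2}`
(for `n` even this is the cocktail party graph `CP(n/2)`, i.e. `K_n` minus a
perfect matching): `x ~ y` iff `y - x ∉ {0, n/2}`.  (For `n` even the set
`{0, n/2}` is closed under negation, so the condition is stated symmetrically;
the two conjuncts are then equivalent.) -/
def cocktailParty (n : ℕ) : SimpleGraph (ZMod n) where
  Adj x y := x ≠ y ∧ y - x ≠ ((n / 2 : ℕ) : ZMod n) ∧ x - y ≠ ((n / 2 : ℕ) : ZMod n)
  symm := by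
    constructor
    rintro x y ⟨h1, h2, h3⟩
    exact ⟨h1.symm, h3, h2⟩
  loopless := by
    constructor
    rintro x ⟨h1, -⟩
    exact h1 rfl

/-- `W` is a resolving set of `G`. -/
def IsResolving {V : Type*} (G : SimpleGraph V) (W : Set V) : Prop :=
  ∀ u v : V, u ≠ v → ∃ w ∈ W, G.dist u w ≠ G.dist v w

section Aux

variable {n : ℕ}

private lemma cp_adj {x y : ZMod n} :
    (cocktailParty n).Adj x y ↔
      x ≠ y ∧ y - x ≠ ((n / 2 : ℕ) : ZMod n) ∧ x - y ≠ ((n / 2 : ℕ) : ZMod n) := Iff.rfl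

private lemma cp_mm (hn : 8 ≤ n) (hev : Even n) :
    ((n / 2 : ℕ) : ZMod n) + ((n / 2 : ℕ) : ZMod n) = 0 := by
  haveI : NeZero n := ⟨by omega⟩
  rw [← Nat.cast_add]
  obtain ⟨t, ht⟩ := hev
  have h2 : n / 2 + n / 2 = n := by omega
  rw [h2, ZMod.natCast_self]

private lemma cp_m0 (hn : 8 ≤ n) : ((n / 2 : ℕ) : ZMod n) ≠ 0 := by
  haveI : NeZero n := ⟨by omega⟩
  intro h
  rw [ZMod.natCast_eq_zero_iff] at h
  have := Nat.le_of_dvd (by omega) h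
  omega

private lemma cp_m1 (hn : 8 ≤ n) : ((n / 2 : ℕ) : ZMod n) ≠ 1 := by
  haveI : NeZero n := ⟨by omega⟩
  intro h
  have h1 : ((n / 2 : ℕ) : ZMod n).val = n / 2 := ZMod.val_natCast_of_lt (by omega)
  have h2 : (1 : ZMod n).val = 1 % n := ZMod.val_one_eq_one_mod n
  rw [h] at h1
  rw [h1, Nat.mod_eq_of_lt (show 1 < n by omega)] at h2
  omega

private lemma cp_dist_two (hn : 8 ≤ n) (hev : Even n) {u w : ZMod n}
    (h : u - w = ((n / 2 : ℕ) : ZMod n)) : (cocktailParty n).dist u w = 2 := by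
  haveI : NeZero n := ⟨by omega⟩
  haveI : Fact (1 < n) := ⟨by omega⟩
  set m : ZMod n := ((n / 2 : ℕ) : ZMod n) with hm
  have hmm : m + m = 0 := cp_mm hn hev
  have hm0 : m ≠ 0 := cp_m0 hn
  have hm1 : m ≠ 1 := cp_m1 hn
  have h1m : (1 : ZMod n) ≠ m := fun he => hm1 he.symm
  have hw : w = u + m := by linear_combination -h - hmm
  have hne : u ≠ w := by
    intro he; rw [he, sub_self] at h; exact hm0 h.symm
  have hnadj : ¬ (cocktailParty n).Adj u w := by
    rw [cp_adj]; push_neg; intro _ _; exact h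
  have ha1 : (cocktailParty n).Adj u (u + 1) := by
    refine ⟨fun he => one_ne_zero (α := ZMod n) (by linear_combination -he), ?_, ?_⟩
    · intro he; exact h1m (by linear_combination he)
    · intro he; exact h1m (by linear_combination -he - hmm)
  have ha2 : (cocktailParty n).Adj (u + 1) w := by
    rw [hw]
    refine ⟨fun he => h1m (by linear_combination he), ?_, ?_⟩
    · intro he; exact one_ne_zero (α := ZMod n) (by linear_combination -he)
    · intro he; exact one_ne_zero (α := ZMod n) (by linear_combination he + hmm)
  have hle : (cocktailParty n).dist u w ≤ 2 := by
    have hlen : ((ha1.toWalk.append ha2.toWalk) : (cocktailParty n).Walk u w).length = 2 := by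
      simp
    exact hlen ▸ SimpleGraph.dist_le _
  have hr : (cocktailParty n).Reachable u w := ⟨ha1.toWalk.append ha2.toWalk⟩
  have h0 : (cocktailParty n).dist u w ≠ 0 := fun h' => hne (hr.dist_eq_zero_iff.mp h')
  have h1 : (cocktailParty n).dist u w ≠ 1 := fun h' =>
    hnadj (SimpleGraph.dist_eq_one_iff_adj.mp h')
  omega

end Aux

theorem cocktailParty_clique_resolving (n : ℕ) (hn : 8 ≤ n) (hev : Even n) (k : ℕ)
    (hk : k = n / 2 - 1) :
    ∀ W : Set (ZMod n), (cocktailParty n).IsClique W → W.ncard = k + 1 →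
      IsResolving (cocktailParty n) W ∧
      ∀ x : ZMod n, x ∉ W → IsResolving (cocktailParty n) (insert x W) := by
  intro W hclique hcard
  haveI : NeZero n := ⟨by omega⟩
  set m : ZMod n := ((n / 2 : ℕ) : ZMod n) with hm
  have hmm : m + m = 0 := cp_mm hn hev
  have hm0 : m ≠ 0 := cp_m0 hn
  have hWfin : W.Finite := Set.toFinite W
  -- counting: every element or its antipode lies in W
  have hkey : ∀ x : ZMod n, x ∉ W → x + m ∈ W := by
    intro x hx
    set F : Finset (ZMod n) := hWfin.toFinset with hF
    have hFcard : F.card = k + 1 := by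
      rw [← Set.ncard_eq_toFinset_card W hWfin, hcard]
    set G : Finset (ZMod n) := F.image (· + m) with hG
    have hGcard : G.card = k + 1 := by
      rw [hG, Finset.card_image_of_injective _ (add_left_injective m), hFcard]
    have hdisj : Disjoint F G := by
      rw [Finset.disjoint_left]
      intro a haF haG
      obtain ⟨b, hbF, hba⟩ := Finset.mem_image.mp haG
      have haW : a ∈ W := (Set.Finite.mem_toFinset hWfin).mp haF
      have hbW : b ∈ W := (Set.Finite.mem_toFinset hWfin).mp hbF
      by_cases hab : a = b
      · rw [hab] at hba
        exact hm0 (by linear_combination hba)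
      · have hadj := hclique haW hbW hab
        exact hadj.2.2 (by linear_combination -hba)
    have hunion : (F ∪ G).card = Fintype.card (ZMod n) := by
      rw [Finset.card_union_of_disjoint hdisj, hFcard, hGcard, ZMod.card]
      obtain ⟨t, ht⟩ := hev
      omega
    have huniv : F ∪ G = Finset.univ := Finset.eq_univ_of_card _ hunion
    have hxmem : x ∈ F ∪ G := huniv ▸ Finset.mem_univ x
    rcases Finset.mem_union.mp hxmem with hxF | hxG
    · exact absurd ((Set.Finite.mem_toFinset hWfin).mp hxF) hx
    · obtain ⟨b, hbF, hbx⟩ := Finset.mem_image.mp hxG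
      have hbW : b ∈ W := (Set.Finite.mem_toFinset hWfin).mp hbF
      have : x + m = b := by linear_combination -hbx + hmm
      rwa [this]
  -- resolving
  have hres : IsResolving (cocktailParty n) W := by
    intro u v huv
    by_cases hu : u ∈ W
    · refine ⟨u, hu, ?_⟩
      rw [SimpleGraph.dist_self]
      by_cases hvm : v - u = m
      · rw [cp_dist_two hn hev hvm]; omega
      · have hadj : (cocktailParty n).Adj v u := by
          refine ⟨huv.symm, ?_, hvm⟩
          intro he; exact hvm (by linear_combination -he - hmm)
        rw [SimpleGraph.dist_eq_one_iff_adj.mpr hadj]; omega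
    by_cases hv : v ∈ W
    · refine ⟨v, hv, ?_⟩
      rw [SimpleGraph.dist_self]
      by_cases hum : u - v = m
      · rw [cp_dist_two hn hev hum]; omega
      · have hadj : (cocktailParty n).Adj u v := by
          refine ⟨huv, ?_, hum⟩
          intro he; exact hum (by linear_combination -he - hmm)
        rw [SimpleGraph.dist_eq_one_iff_adj.mpr hadj]; omega
    · refine ⟨u + m, hkey u hu, ?_⟩
      have hd1 : (cocktailParty n).dist u (u + m) = 2 :=
        cp_dist_two hn hev (by linear_combination -hmm)
      have hvne : v ≠ u + m := fun he => hv (he ▸ hkey u hu)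
      have hadj : (cocktailParty n).Adj v (u + m) := by
        refine ⟨hvne, ?_, ?_⟩
        · intro he; exact huv (show v = u by linear_combination -he).symm
        · intro he; exact huv (show v = u by linear_combination he + hmm).symm
      rw [hd1, SimpleGraph.dist_eq_one_iff_adj.mpr hadj]; omega
  refine ⟨hres, fun x _ u v huv => ?_⟩
  obtain ⟨w, hw, hne⟩ := hres u v huv
  exact ⟨w, Set.mem_insert_of_mem x hw, hne⟩
end
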